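/- No GCM can satisfy both Easy Gas Estimation and Efficiency. Precisely: suppose the makespan function v satisfies v({tx}) = t(tx) for every transaction tx, and v({tx1, tx2}) = max(t(tx1), t(tx2)) for any two transactions with disjoint storage key sets. Then there is no GCM gas such that gas_{T∪{tx}}(tx) does not depend on T (Easy Gas Estimation) and the sum over tx in T of gas_T(tx) equals v(T) for every finite set T of transactions (Efficiency). -/
import Mathlib


/-- No GCM can satisfy both Easy Gas Estimation and Efficiency,
given that the makespan function `v` satisfies `v({tx}) = t(tx)` and equals the
maximum of the two times on pairs of transactions with disjoint key sets. -/
theorem no_gcm_with_easy_gas_estimation_and_efficiency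
    {Key Tx : Type} [Infinite Key] [DecidableEq Key] [DecidableEq Tx]
    (t : Tx → ℝ) (keys : Tx → Finset Key)
    (htpos : ∀ tx, 0 < t tx) (hKne : ∀ tx, (keys tx).Nonempty)
    -- richness: every admissible pair `(τ, K)` is realized by some transaction
    (hrich : ∀ (τ : ℝ) (K : Finset Key), 0 < τ → K.Nonempty →
      ∃ tx, t tx = τ ∧ keys tx = K)
    (v : Finset Tx → ℝ)
    (hsing : ∀ tx : Tx, v {tx} = t tx)
    (hpair : ∀ tx1 tx2 : Tx, tx1 ≠ tx2 → keys tx1 ∩ keys tx2 = ∅ →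
      v {tx1, tx2} = max (t tx1) (t tx2)) :
    ¬ ∃ gas : Finset Tx → Tx → ℝ,
        -- Easy Gas Estimation: gas_{T∪{tx}}(tx) does not depend on T
        (∀ (T1 T2 : Finset Tx) (tx : Tx),
          gas (insert tx T1) tx = gas (insert tx T2) tx) ∧
        -- Efficiency
        (∀ T : Finset Tx, ∑ tx ∈ T, gas T tx = v T) := by
  rintro ⟨gas, hest, heff⟩
  -- two distinct keys
  obtain ⟨k1, k2, hk⟩ : ∃ k1 k2 : Key, k1 ≠ k2 := by
    obtain ⟨k1⟩ : Nonempty Key := inferInstance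
    obtain ⟨k2, hk2⟩ := Infinite.exists_notMem_finset ({k1} : Finset Key)
    exact ⟨k1, k2, fun h => hk2 (by simp [h])⟩
  obtain ⟨tx1, ht1, hK1⟩ := hrich 1 {k1} one_pos (Finset.singleton_nonempty _)
  obtain ⟨tx2, ht2, hK2⟩ := hrich 1 {k2} one_pos (Finset.singleton_nonempty _)
  have hne : tx1 ≠ tx2 := by
    intro h
    apply hk
    have := hK1 ▸ h ▸ hK2
    simpa using this
  have hdisj : keys tx1 ∩ keys tx2 = ∅ := by
    rw [hK1, hK2]
    simp [Finset.singleton_inter_of_notMem, hk]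
  -- singleton sums
  have h1 : gas {tx1} tx1 = 1 := by
    have := heff {tx1}
    rw [hsing, ht1] at this
    simpa using this
  have h2 : gas {tx2} tx2 = 1 := by
    have := heff {tx2}
    rw [hsing, ht2] at this
    simpa using this
  -- pair sum
  have hp : gas {tx1, tx2} tx1 + gas {tx1, tx2} tx2 = 1 := by
    have := heff {tx1, tx2}
    rw [hpair tx1 tx2 hne hdisj, ht1, ht2] at this
    rw [Finset.sum_pair hne] at this
    simpa using this
  have e1 : gas {tx1, tx2} tx1 = gas {tx1} tx1 := by
    have := hest {tx2} ∅ tx1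
    simpa using this
  have e2 : gas {tx1, tx2} tx2 = gas {tx2} tx2 := by
    have := hest {tx1} ∅ tx2
    have h : (insert tx2 {tx1} : Finset Tx) = {tx1, tx2} := by
      ext x; simp; tauto
    rw [h] at this
    simpa using this
  rw [e1, e2, h1, h2] at hp
  norm_num at hp
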